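/- Let S(n) ⊆ {0,1}^{2n} be the set of Boolean strings with exactly n ones. For any d ≤ n, every polynomial of degree d that vanishes on S(n) lies in the ideal generated by {xᵢ² − xᵢ : i ∈ [2n]} ∪ {Σᵢ xᵢ − n}, with a derivation in which every term has degree at most d. -/

import Mathlib

open MvPolynomial

set_option linter.unusedSectionVars false
set_option maxHeartbeats 1000000

namespace MaxBi
open Finset
variable {σ : Type*} [Fintype σ] [DecidableEq σ]


/-- up operator -/
def Uop (f : Finset σ → ℝ) : Finset σ → ℝ := fun T => ∑ i ∈ T, f (T.erase i)

/-- down operator -/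
def Dop (f : Finset σ → ℝ) : Finset σ → ℝ := fun S => ∑ i ∈ Sᶜ, f (insert i S)

/-- master reindexing lemma -/
lemma sum_erase_swap {M : Type*} [AddCommMonoid M] (F : Finset σ → σ → M)
    (A : Finset (Finset σ)) :
    ∑ T ∈ A, ∑ i ∈ T, F (T.erase i) i
      = ∑ S : Finset σ, ∑ i ∈ Sᶜ, (if insert i S ∈ A then F S i else 0) := by
  have h1 : ∀ S : Finset σ, (∑ i ∈ Sᶜ, (if insert i S ∈ A then F S i else 0))
      = ∑ i ∈ Sᶜ.filter (fun i => insert i S ∈ A), F S i := by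
    intro S; rw [Finset.sum_filter]
  simp_rw [h1]
  rw [Finset.sum_sigma', Finset.sum_sigma']
  refine Finset.sum_nbij' (fun x => ⟨x.1.erase x.2, x.2⟩) (fun x => ⟨insert x.2 x.1, x.2⟩)
    ?_ ?_ ?_ ?_ ?_
  · rintro ⟨T, i⟩ hx
    simp only [Finset.mem_sigma, Finset.mem_filter, Finset.mem_compl] at hx ⊢
    obtain ⟨hT, hi⟩ := hx
    refine ⟨Finset.mem_univ _, Finset.notMem_erase _ _, ?_⟩
    rwa [Finset.insert_erase hi]
  · rintro ⟨S, i⟩ hx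
    simp only [Finset.mem_sigma, Finset.mem_filter, Finset.mem_compl, Finset.mem_univ,
      true_and] at hx ⊢
    exact ⟨hx.2, Finset.mem_insert_self _ _⟩
  · rintro ⟨T, i⟩ hx
    simp only [Finset.mem_sigma] at hx
    simp [Finset.insert_erase hx.2]
  · rintro ⟨S, i⟩ hx
    simp only [Finset.mem_sigma, Finset.mem_filter, Finset.mem_compl, Finset.mem_univ,
      true_and] at hx
    simp [Finset.erase_insert hx.1]
  · rintro ⟨T, i⟩ hx
    rfl


lemma adj (f g : Finset σ → ℝ) :
    ∑ T : Finset σ, Uop f T * g T = ∑ S : Finset σ, f S * Dop g S := by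
  have : ∀ T : Finset σ, Uop f T * g T = ∑ i ∈ T, f (T.erase i) * g (insert i (T.erase i)) := by
    intro T
    rw [Uop, Finset.sum_mul]
    exact Finset.sum_congr rfl fun i hi => by rw [Finset.insert_erase hi]
  simp_rw [this]
  rw [sum_erase_swap (fun S i => f S * g (insert i S)) Finset.univ]
  simp only [Finset.mem_univ, if_true]
  exact Finset.sum_congr rfl fun S _ => by rw [Dop, Finset.mul_sum]

lemma DU_comm (f : Finset σ → ℝ) (S : Finset σ) :
    Dop (Uop f) S = Uop (Dop f) S + ((Sᶜ.card : ℝ) - S.card) * f S := by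
  have h1 : Dop (Uop f) S
      = ∑ i ∈ Sᶜ, (f S + ∑ j ∈ S, f (insert i (S.erase j))) := by
    refine Finset.sum_congr rfl fun i hi => ?_
    rw [Finset.mem_compl] at hi
    rw [Uop]
    rw [Finset.sum_insert hi, Finset.erase_insert hi]
    congr 1
    refine Finset.sum_congr rfl fun j hj => ?_
    rw [Finset.erase_insert_of_ne (by rintro rfl; exact hi hj)]
  have h2 : Uop (Dop f) S
      = ∑ j ∈ S, (f S + ∑ i ∈ Sᶜ, f (insert i (S.erase j))) := by
    refine Finset.sum_congr rfl fun j hj => ?_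
    rw [Dop]
    have hc : (S.erase j)ᶜ = insert j Sᶜ := by
      ext x
      simp only [Finset.mem_compl, Finset.mem_erase, Finset.mem_insert]
      by_cases hx : x = j <;> simp [hx, hj]
    rw [hc, Finset.sum_insert (by simp [hj]), Finset.insert_erase hj]
  rw [h1, h2, Finset.sum_add_distrib, Finset.sum_add_distrib, Finset.sum_const,
    Finset.sum_const, Finset.sum_comm]
  push_cast
  ring

lemma Uop_level {f : Finset σ → ℝ} {ℓ : ℕ} (hf : ∀ S, f S ≠ 0 → S.card = ℓ) :
    ∀ S, Uop f S ≠ 0 → S.card = ℓ + 1 := by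
  intro S hS
  by_contra hcard
  apply hS
  rw [Uop]
  refine Finset.sum_eq_zero fun i hi => ?_
  by_contra h0
  have h1 : S.card - 1 = ℓ := by rw [← hf _ h0, Finset.card_erase_of_mem hi]
  have h2 : 0 < S.card := Finset.card_pos.mpr ⟨i, hi⟩
  omega

lemma card_pos_of_ne  {f : Finset σ → ℝ} {ℓ : ℕ} (hf : ∀ S, f S ≠ 0 → S.card = ℓ)
    (hℓ : 2 * ℓ < Fintype.card σ) (S : Finset σ) :
    0 ≤ ((Sᶜ.card : ℝ) - S.card) * f S ^ 2 := by
  by_cases h0 : f S = 0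
  · simp [h0]
  · have hc := hf S h0
    have hcompl : Sᶜ.card = Fintype.card σ - S.card := Finset.card_compl S
    have hle : S.card ≤ Fintype.card σ := Finset.card_le_univ S
    have : (0:ℝ) < (Sᶜ.card : ℝ) - S.card := by
      rw [hcompl, hc]
      have : ℓ ≤ Fintype.card σ := by omega
      push_cast [Nat.cast_sub this]
      have : (2:ℝ) * ℓ < Fintype.card σ := by exact_mod_cast hℓ
      linarith
    positivity

lemma U_inj {f : Finset σ → ℝ} {ℓ : ℕ} (hf : ∀ S, f S ≠ 0 → S.card = ℓ)
    (hℓ : 2 * ℓ < Fintype.card σ) (hU : Uop f = 0) : f = 0 := by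
  have h0 : ∑ S : Finset σ, f S * Dop (Uop f) S = 0 := by
    rw [hU]
    refine Finset.sum_eq_zero fun S _ => ?_
    simp [Dop]
  have hexp : ∑ S : Finset σ, f S * Dop (Uop f) S
      = ∑ S : Finset σ, Dop f S * Dop f S
        + ∑ S : Finset σ, ((Sᶜ.card : ℝ) - S.card) * f S ^ 2 := by
    have : ∀ S : Finset σ, f S * Dop (Uop f) S
        = Uop (Dop f) S * f S + ((Sᶜ.card : ℝ) - S.card) * f S ^ 2 := by
      intro S; rw [DU_comm]; ring
    simp_rw [this, Finset.sum_add_distrib]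
    congr 1
    rw [adj]
  have hDnn : (0:ℝ) ≤ ∑ S : Finset σ, Dop f S * Dop f S :=
    Finset.sum_nonneg fun S _ => mul_self_nonneg _
  have hCnn : (0:ℝ) ≤ ∑ S : Finset σ, ((Sᶜ.card : ℝ) - S.card) * f S ^ 2 :=
    Finset.sum_nonneg fun S _ => card_pos_of_ne hf hℓ S
  have hCzero : ∑ S : Finset σ, ((Sᶜ.card : ℝ) - S.card) * f S ^ 2 = 0 := by
    rw [hexp] at h0; linarith
  funext S
  simp only [Pi.zero_apply]
  by_contra h0f
  have heach := (Finset.sum_eq_zero_iff_of_nonneg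
    (fun S _ => card_pos_of_ne hf hℓ S)).mp hCzero S (Finset.mem_univ S)
  have hc := hf S h0f
  have hpos : (0:ℝ) < (Sᶜ.card : ℝ) - S.card := by
    have hcompl : Sᶜ.card = Fintype.card σ - S.card := Finset.card_compl S
    have : ℓ ≤ Fintype.card σ := by omega
    rw [hcompl, hc]
    push_cast [Nat.cast_sub this]
    have : (2:ℝ) * ℓ < Fintype.card σ := by exact_mod_cast hℓ
    linarith
  have : f S ^ 2 = 0 := by
    rcases mul_eq_zero.mp heach with h | h
    · linarith
    · exact h
  exact h0f (by nlinarith [sq_nonneg (f S)] : f S = 0)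

lemma Z_up (f : Finset σ → ℝ) (T : Finset σ) (ℓ : ℕ) :
    ∑ S ∈ T.powersetCard (ℓ+1), Uop f S
      = ((T.card - ℓ : ℕ) : ℝ) * ∑ S ∈ T.powersetCard ℓ, f S := by
  have h := sum_erase_swap (fun S _ => f S) (T.powersetCard (ℓ+1))
  simp only [Uop]
  rw [h]
  have key : ∀ S' : Finset σ,
      (∑ i ∈ S'ᶜ, if insert i S' ∈ T.powersetCard (ℓ+1) then f S' else 0)
      = (if S' ∈ T.powersetCard ℓ then ((T.card - ℓ : ℕ) : ℝ) * f S' else 0) := by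
    intro S'
    rw [← Finset.sum_filter]
    rw [Finset.sum_const]
    by_cases hS' : S' ∈ T.powersetCard ℓ
    · rw [if_pos hS']
      rw [Finset.mem_powersetCard] at hS'
      have hset : S'ᶜ.filter (fun i => insert i S' ∈ T.powersetCard (ℓ+1)) = T \ S' := by
        ext i
        simp only [Finset.mem_filter, Finset.mem_compl, Finset.mem_powersetCard,
          Finset.mem_sdiff]
        constructor
        · rintro ⟨hi, hsub, _⟩
          exact ⟨hsub (Finset.mem_insert_self i S'), hi⟩
        · rintro ⟨hiT, hi⟩
          refine ⟨hi, Finset.insert_subset hiT hS'.1, ?_⟩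
          rw [Finset.card_insert_of_notMem hi, hS'.2]
      rw [hset, Finset.card_sdiff_of_subset hS'.1, hS'.2]
      rw [nsmul_eq_mul]
    · rw [if_neg hS']
      have hset : S'ᶜ.filter (fun i => insert i S' ∈ T.powersetCard (ℓ+1)) = ∅ := by
        rw [Finset.filter_eq_empty_iff]
        intro i hi
        rw [Finset.mem_compl] at hi
        rw [Finset.mem_powersetCard]
        rintro ⟨hsub, hcard⟩
        apply hS'
        rw [Finset.mem_powersetCard]
        refine ⟨(Finset.subset_insert i S').trans hsub |>.trans (le_refl _), ?_⟩
        · rw [Finset.card_insert_of_notMem hi] at hcard; omega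
      rw [hset]; simp
  simp_rw [key]
  rw [Finset.sum_ite_mem, Finset.univ_inter, Finset.mul_sum]

lemma Z_inj (n : ℕ) (hN : Fintype.card σ = 2*n) :
    ∀ (k ℓ : ℕ) (f : Finset σ → ℝ), ℓ + k = n → (∀ S, f S ≠ 0 → S.card = ℓ) →
    (∀ T : Finset σ, T.card = n → ∑ S ∈ T.powersetCard ℓ, f S = 0) → f = 0 := by
  intro k
  induction k with
  | zero =>
    intro ℓ f hℓ hlev hvan
    funext S
    simp only [Pi.zero_apply]
    by_contra h0
    have hc : S.card = ℓ := hlev S h0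
    have := hvan S (by omega)
    rw [← hc, Finset.powersetCard_self, Finset.sum_singleton] at this
    exact h0 this
  | succ k ih =>
    intro ℓ f hℓ hlev hvan
    have hU : Uop f = 0 := by
      refine ih (ℓ+1) (Uop f) (by omega) (Uop_level hlev) ?_
      intro T hT
      rw [Z_up, hvan T hT, mul_zero]
    exact U_inj hlev (by omega) hU

/-- recursive construction of the multiplier coefficients -/
noncomputable def rr (nn : ℕ) (c : Finset σ → ℝ) : ℕ → (Finset σ → ℝ) :=
  Nat.rec 0 (fun j prev => prev +
    fun S => if S.card = j then ((j : ℝ) - nn)⁻¹ * (c S - Uop prev S) else 0)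

lemma rr_zero (nn : ℕ) (c : Finset σ → ℝ) : rr nn c 0 = 0 := rfl

lemma rr_succ (nn : ℕ) (c : Finset σ → ℝ) (j : ℕ) :
    rr nn c (j+1) = rr nn c j +
      fun S => if S.card = j then ((j : ℝ) - nn)⁻¹ * (c S - Uop (rr nn c j) S) else 0 := rfl

lemma rr_support (nn : ℕ) (c : Finset σ → ℝ) :
    ∀ j S, j ≤ S.card → rr nn c j S = 0 := by
  intro j
  induction j with
  | zero => intro S _; rfl
  | succ j ih =>
    intro S hS
    rw [rr_succ, Pi.add_apply, ih S (by omega), if_neg (by omega), add_zero]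

lemma rr_stab (nn : ℕ) (c : Finset σ → ℝ) :
    ∀ j m, j ≤ m → ∀ S, S.card < j → rr nn c m S = rr nn c j S := by
  intro j m
  induction m with
  | zero => intro hjm S hS; interval_cases j; rfl
  | succ m ih =>
    intro hjm S hS
    rcases Nat.eq_or_lt_of_le hjm with h | h
    · rw [h]
    · have hj : j ≤ m := by omega
      rw [rr_succ, Pi.add_apply, if_neg (by omega), add_zero]
      exact ih hj S hS

lemma rr_eq (nn : ℕ) (c : Finset σ → ℝ) (j : ℕ) (hj : j < nn) (S : Finset σ)
    (hS : S.card = j) :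
    c S = ((j : ℝ) - nn) * rr nn c (j+1) S + Uop (rr nn c j) S := by
  have hne : ((j : ℝ) - nn) ≠ 0 := by
    have : (j : ℝ) < nn := by exact_mod_cast hj
    linarith
  rw [rr_succ, Pi.add_apply, rr_support nn c j S (by omega), if_pos hS, zero_add]
  field_simp
  ring

lemma Uop_rr_stab (nn : ℕ) (c : Finset σ → ℝ) (j m : ℕ) (hjm : j ≤ m) (S : Finset σ)
    (hS : S.card = j) : Uop (rr nn c m) S = Uop (rr nn c j) S := by
  refine Finset.sum_congr rfl fun i hi => ?_
  have : (S.erase i).card < j := by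
    rw [Finset.card_erase_of_mem hi, hS]
    have : 0 < S.card := Finset.card_pos.mpr ⟨i, hi⟩
    omega
  rw [rr_stab nn c j m hjm _ this]

lemma tele (n d : ℕ) (hd : d ≤ n) (c : Finset σ → ℝ) :
    ∀ j, j < d → ∀ T : Finset σ, T.card = n →
      ∑ ℓ ∈ Finset.range (j+1), ∑ S ∈ T.powersetCard ℓ, c S
        = ((j : ℝ) - n) * ∑ S ∈ T.powersetCard j, rr n c (j+1) S := by
  intro j
  induction j with
  | zero =>
    intro h0 T hT
    rw [Finset.sum_range_one, Finset.powersetCard_zero, Finset.sum_singleton,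
      Finset.sum_singleton]
    have hemp : (∅ : Finset σ).card = 0 := rfl
    have := rr_eq n c 0 (by omega) (∅ : Finset σ) hemp
    rw [rr_zero] at this
    simp only [Uop, Finset.sum_empty] at this
    rw [this]
    push_cast
    ring
  | succ j ih =>
    intro hj T hT
    rw [Finset.sum_range_succ, ih (by omega) T hT]
    have hc : ∀ S ∈ T.powersetCard (j+1), c S
        = (((j:ℕ)+1 : ℝ) - n) * rr n c (j+2) S + Uop (rr n c (j+1)) S := by
      intro S hS
      rw [Finset.mem_powersetCard] at hS
      have := rr_eq n c (j+1) (by omega) S hS.2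
      push_cast at this ⊢
      exact this
    rw [Finset.sum_congr rfl hc, Finset.sum_add_distrib, ← Finset.mul_sum]
    rw [Z_up (rr n c (j+1)) T j, hT]
    have hcast : ((n - j : ℕ) : ℝ) = (n : ℝ) - j := by
      rw [Nat.cast_sub (by omega)]
    rw [hcast]
    push_cast
    ring

lemma core (n d : ℕ) (hd : d ≤ n) (hN : Fintype.card σ = 2*n)
    (c : Finset σ → ℝ) (hsupp : ∀ S, c S ≠ 0 → S.card ≤ d)
    (hvan : ∀ T : Finset σ, T.card = n → ∑ S ∈ T.powerset, c S = 0) :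
    ∃ r : Finset σ → ℝ, (∀ S, r S ≠ 0 → S.card + 1 ≤ d) ∧
      ∀ S, c S = Uop r S + ((S.card : ℝ) - n) * r S := by
  set r := rr n c d with hr
  have hrsupp : ∀ S, r S ≠ 0 → S.card + 1 ≤ d := by
    intro S h
    by_contra hcon
    exact h (rr_support n c d S (by omega))
  -- split of the powerset sum
  have hsplit : ∀ T : Finset σ, T.card = n →
      ∑ ℓ ∈ Finset.range (d+1), ∑ S ∈ T.powersetCard ℓ, c S = 0 := by
    intro T hT
    have h1 := hvan T hT
    rw [Finset.sum_powerset] at h1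
    rw [← h1, hT]
    refine Finset.sum_subset (by intro x hx; simp at hx ⊢; omega) ?_
    intro ℓ hℓ hℓ2
    simp only [Finset.mem_range] at hℓ hℓ2
    refine Finset.sum_eq_zero fun S hS => ?_
    rw [Finset.mem_powersetCard] at hS
    by_contra h0
    have := hsupp S h0
    omega
  -- the hard step at level d
  have hdlev : ∀ S : Finset σ, S.card = d → c S = Uop r S := by
    have hδ : (fun S => if S.card = d then c S - Uop r S else 0) = (0 : Finset σ → ℝ) := by
      refine Z_inj n hN (n - d) d _ (by omega) (fun S hS => ?_) (fun T hT => ?_)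
      · by_contra hcon; exact hS (if_neg hcon)
      · have hmem : ∀ S ∈ T.powersetCard d, (if S.card = d then c S - Uop r S else 0)
            = c S - Uop r S := by
          intro S hS
          rw [Finset.mem_powersetCard] at hS
          rw [if_pos hS.2]
        rw [Finset.sum_congr rfl hmem, Finset.sum_sub_distrib]
        rcases Nat.eq_zero_or_pos d with h0 | hpos
        · subst h0
          have h1 := hsplit T hT
          rw [Finset.sum_range_one] at h1
          rw [h1]
          have : ∀ S ∈ T.powersetCard 0, Uop r S = 0 := by
            intro S hS
            rw [Finset.mem_powersetCard] at hS
            have : S = ∅ := Finset.card_eq_zero.mp hS.2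
            subst this
            simp [Uop]
          rw [Finset.sum_eq_zero this, sub_zero]
        · obtain ⟨e, rfl⟩ : ∃ e, d = e + 1 := ⟨d - 1, by omega⟩
          have h1 := hsplit T hT
          rw [Finset.sum_range_succ, tele n (e+1) hd c e (by omega) T hT] at h1
          have h3 := Z_up (rr n c (e+1)) T e
          rw [hT, Nat.cast_sub (by omega : e ≤ n)] at h3
          rw [hr, h3]
          linear_combination h1
    intro S hScard
    have := congrFun hδ S
    simp only [Pi.zero_apply, if_pos hScard] at this
    linarith
  refine ⟨r, hrsupp, fun S => ?_⟩
  rcases lt_trichotomy S.card d with hlt | heq | hgt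
  · have h1 := rr_eq n c S.card (by omega) S rfl
    have h2 : r S = rr n c (S.card + 1) S := rr_stab n c (S.card+1) d (by omega) S (by omega)
    have h3 : Uop r S = Uop (rr n c S.card) S := Uop_rr_stab n c S.card d (by omega) S rfl
    rw [h1, h2, h3]
    ring
  · have h1 := hdlev S heq
    have h2 : r S = 0 := rr_support n c d S (by omega)
    rw [h1, h2, mul_zero, add_zero]
  · have h1 : c S = 0 := by
      by_contra h0
      have := hsupp S h0
      omega
    have h2 : r S = 0 := rr_support n c d S (by omega)
    have h3 : Uop r S = 0 := by
      refine Finset.sum_eq_zero fun i hi => ?_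
      refine rr_support n c d _ ?_
      rw [Finset.card_erase_of_mem hi]
      omega
    rw [h1, h2, h3]
    simp

noncomputable def msf (S : Finset σ) : MvPolynomial σ ℝ := ∏ i ∈ S, X i
noncomputable def toPoly (c : Finset σ → ℝ) : MvPolynomial σ ℝ :=
  ∑ S : Finset σ, C (c S) * msf S

lemma msf_totalDegree (S : Finset σ) : (msf S).totalDegree ≤ S.card := by
  refine le_trans (totalDegree_finset_prod S X) ?_
  have : ∀ i ∈ S, (X i : MvPolynomial σ ℝ).totalDegree = 1 := fun i _ => totalDegree_X i
  rw [Finset.sum_congr rfl this, Finset.sum_const, smul_eq_mul, mul_one]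

lemma toPoly_totalDegree {c : Finset σ → ℝ} {b : ℕ} (h : ∀ S, c S ≠ 0 → S.card ≤ b) :
    (toPoly c).totalDegree ≤ b := by
  refine le_trans (totalDegree_finset_sum _ _) ?_
  rw [Finset.sup_le_iff]
  intro S _
  by_cases h0 : c S = 0
  · simp [h0]
  · refine le_trans (totalDegree_mul _ _) ?_
    rw [totalDegree_C, zero_add]
    exact le_trans (msf_totalDegree S) (h S h0)

lemma toPoly_add (c c' : Finset σ → ℝ) : toPoly (c + c') = toPoly c + toPoly c' := by
  rw [toPoly, toPoly, toPoly, ← Finset.sum_add_distrib]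
  refine Finset.sum_congr rfl fun S _ => ?_
  rw [Pi.add_apply, map_add, add_mul]

/-- characteristic vector -/
def chi (T : Finset σ) : σ → ℝ := fun i => if i ∈ T then 1 else 0

lemma chi_bool (T : Finset σ) : ∀ i, chi T i = 0 ∨ chi T i = 1 := by
  intro i; rw [chi]; split <;> simp

lemma chi_sum (T : Finset σ) : ∑ i : σ, chi T i = T.card := by
  simp only [chi]
  rw [Finset.sum_ite_mem, Finset.univ_inter, Finset.sum_const, nsmul_eq_mul, mul_one]

lemma eval_msf (T S : Finset σ) : eval (chi T) (msf S) = if S ⊆ T then 1 else 0 := by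
  rw [msf, map_prod]
  by_cases h : S ⊆ T
  · rw [if_pos h]
    refine Finset.prod_eq_one fun i hi => ?_
    simp [chi, h hi]
  · rw [if_neg h]
    obtain ⟨i, hiS, hiT⟩ := Finset.not_subset.mp h
    refine Finset.prod_eq_zero hiS ?_
    simp [chi, hiT]

lemma eval_toPoly (T : Finset σ) (c : Finset σ → ℝ) :
    eval (chi T) (toPoly c) = ∑ S ∈ T.powerset, c S := by
  rw [toPoly, map_sum]
  have : ∀ S : Finset σ, eval (chi T) (C (c S) * msf S) = if S ∈ T.powerset then c S else 0 := by
    intro S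
    rw [map_mul, eval_C, eval_msf]
    by_cases h : S ⊆ T
    · rw [if_pos h, if_pos (Finset.mem_powerset.mpr h), mul_one]
    · rw [if_neg h, if_neg (fun hc => h (Finset.mem_powerset.mp hc)), mul_zero]
  rw [Finset.sum_congr rfl (fun S _ => this S), Finset.sum_ite_mem, Finset.univ_inter]

lemma eval_sq_bool (x : σ → ℝ) (hx : ∀ i, x i = 0 ∨ x i = 1) (i : σ) :
    eval x ((X i)^2 - X i) = 0 := by
  rw [map_sub, map_pow, eval_X]
  rcases hx i with h | h <;> rw [h] <;> ring

lemma msf_eq_monomial (S : Finset σ) :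
    msf S = monomial (∑ i ∈ S, Finsupp.single i 1) (1:ℝ) := by
  classical
  induction S using Finset.induction with
  | empty => simp [msf]
  | insert a s hx ih =>
    rw [msf, Finset.prod_insert hx, ← msf, ih, Finset.sum_insert hx, X,
      monomial_mul, one_mul]

lemma sq_deg (i : σ) : ((X i)^2 - (X i) : MvPolynomial σ ℝ).totalDegree ≤ 2 := by
  refine le_trans (totalDegree_sub _ _) ?_
  rw [totalDegree_X]
  refine max_le (le_trans (totalDegree_pow _ _) ?_) (by omega)
  rw [totalDegree_X]

/-- degree of an exponent vector -/
def degE (e : σ →₀ ℕ) : ℕ := e.sum fun _ m => m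

lemma support_card_le_degE (e : σ →₀ ℕ) : e.support.card ≤ degE e := by
  rw [degE, Finsupp.sum]
  calc e.support.card = ∑ _i ∈ e.support, 1 := by simp
  _ ≤ _ := Finset.sum_le_sum fun i hi => Nat.one_le_iff_ne_zero.mpr (Finsupp.mem_support_iff.mp hi)

lemma degE_add (a b : σ →₀ ℕ) : degE (a + b) = degE a + degE b := by
  rw [degE, degE, degE]
  exact Finsupp.sum_add_index' (fun _ => rfl) (fun _ _ _ => rfl)

lemma degE_single (i : σ) (k : ℕ) : degE (Finsupp.single i k) = k :=
  Finsupp.sum_single_index rfl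

lemma mono_red : ∀ (D : ℕ) (e : σ →₀ ℕ), degE e ≤ D →
    ∃ lam : σ → MvPolynomial σ ℝ,
      (monomial e (1:ℝ)) = msf e.support + ∑ i : σ, lam i * ((X i)^2 - X i) ∧
      ∀ i, (lam i * ((X i)^2 - X i)).totalDegree ≤ degE e := by
  intro D
  induction D with
  | zero =>
    intro e he
    have : e = 0 := by
      ext i
      by_contra h0
      have : i ∈ e.support := Finsupp.mem_support_iff.mpr (by simpa using h0)
      have h1 : 1 ≤ e.support.card := Finset.card_pos.mpr ⟨i, this⟩
      have := support_card_le_degE e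
      omega
    subst this
    exact ⟨0, by simp [msf], by simp⟩
  | succ D ih =>
    intro e he
    by_cases hml : ∀ i ∈ e.support, e i ≤ 1
    · -- multilinear monomial
      refine ⟨0, ?_, by simp⟩
      rw [msf_eq_monomial]
      have : ∑ i ∈ e.support, Finsupp.single i 1 = e := by
        conv_rhs => rw [← Finsupp.sum_single e]
        rw [Finsupp.sum]
        refine Finset.sum_congr rfl fun i hi => ?_
        have h1 : e i = 1 := le_antisymm (hml i hi)
          (Nat.one_le_iff_ne_zero.mpr (Finsupp.mem_support_iff.mp hi))
        rw [h1]
      rw [this]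
      simp
    · push_neg at hml
      obtain ⟨i, hiS, hi2⟩ := hml
      set e' := e - Finsupp.single i 1 with he'
      set e'' := e - Finsupp.single i 2 with he''
      have hge2 : 2 ≤ e i := hi2
      have h1 : e'' + Finsupp.single i 2 = e := by
        ext j
        simp only [Finsupp.add_apply, he'', Finsupp.tsub_apply, Finsupp.single_apply]
        by_cases h : i = j
        · subst h; simp; omega
        · simp [h]
      have h2 : e'' + Finsupp.single i 1 = e' := by
        ext j
        simp only [Finsupp.add_apply, he'', he', Finsupp.tsub_apply, Finsupp.single_apply]
        by_cases h : i = j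
        · subst h; simp; omega
        · simp [h]
      have h3 : e' + Finsupp.single i 1 = e := by
        ext j
        simp only [Finsupp.add_apply, he', Finsupp.tsub_apply, Finsupp.single_apply]
        by_cases h : i = j
        · subst h; simp; omega
        · simp [h]
      have hkey : (monomial e (1:ℝ))
          = monomial e' 1 + monomial e'' 1 * ((X i)^2 - X i) := by
        rw [mul_sub, X_pow_eq_monomial, X, monomial_mul, monomial_mul, h1, h2]
        ring
      have hdegE3 : degE e' + 1 = degE e := by
        rw [← h3, degE_add, degE_single]
      have hdegE1 : degE e'' + 2 = degE e := by
        rw [← h1, degE_add, degE_single]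
      have hsupp : e'.support = e.support := by
        ext j
        simp only [Finsupp.mem_support_iff, he', Finsupp.tsub_apply, Finsupp.single_apply]
        by_cases h : i = j
        · subst h; simp; omega
        · simp [h]
      obtain ⟨lam', hsum', hdeg'⟩ := ih e' (by omega)
      refine ⟨fun j => lam' j + if j = i then monomial e'' 1 else 0, ?_, ?_⟩
      · rw [hkey, hsum', hsupp]
        have : ∀ j : σ, (lam' j + if j = i then (monomial e'' (1:ℝ)) else 0) * ((X j)^2 - X j)
            = lam' j * ((X j)^2 - X j)
              + (if j = i then (monomial e'' (1:ℝ)) * ((X j)^2 - X j) else 0) := by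
          intro j
          split <;> ring
        rw [Finset.sum_congr rfl (fun j _ => this j), Finset.sum_add_distrib,
          Finset.sum_ite_eq' Finset.univ i (fun j => (monomial e'' (1:ℝ)) * ((X j)^2 - X j)),
          if_pos (Finset.mem_univ i)]
        ring
      · intro j
        have hb : ∀ (q₁ q₂ : MvPolynomial σ ℝ), q₁.totalDegree ≤ degE e →
            q₂.totalDegree ≤ degE e → ((q₁ + q₂)).totalDegree ≤ degE e := by
          intro q₁ q₂ hq₁ hq₂
          exact le_trans (totalDegree_add _ _) (max_le hq₁ hq₂)
        have : (lam' j + if j = i then (monomial e'' (1:ℝ)) else 0) * ((X j)^2 - X j)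
            = lam' j * ((X j)^2 - X j)
              + (if j = i then (monomial e'' (1:ℝ)) else 0) * ((X j)^2 - X j) := by ring
        rw [this]
        refine hb _ _ (le_trans (hdeg' j) (by omega)) ?_
        by_cases h : j = i
        · rw [if_pos h]
          refine le_trans (totalDegree_mul _ _) ?_
          have hm : ((monomial e'' (1:ℝ))).totalDegree ≤ degE e'' :=
            le_of_eq (totalDegree_monomial _ one_ne_zero)
          have := sq_deg (σ := σ) j
          omega
        · rw [if_neg h, zero_mul]
          simp

/-- predicate: has a multilinear reduction within degree `b` -/
def Pred (b : ℕ) (p : MvPolynomial σ ℝ) : Prop :=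
  ∃ (c : Finset σ → ℝ) (lam : σ → MvPolynomial σ ℝ),
    p = toPoly c + ∑ i : σ, lam i * ((X i)^2 - X i) ∧
    (∀ S, c S ≠ 0 → S.card ≤ b) ∧
    (∀ i, (lam i * ((X i)^2 - X i)).totalDegree ≤ b)

lemma toPoly_zero : toPoly (0 : Finset σ → ℝ) = 0 := by
  rw [toPoly]
  exact Finset.sum_eq_zero fun S _ => by rw [Pi.zero_apply, map_zero, zero_mul]

lemma Pred_zero (b : ℕ) : Pred b (0 : MvPolynomial σ ℝ) :=
  ⟨0, 0, by simp [toPoly_zero], by simp, by simp⟩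

lemma Pred_add {b : ℕ} {p q : MvPolynomial σ ℝ} (hp : Pred b p) (hq : Pred b q) :
    Pred b (p + q) := by
  obtain ⟨c1, l1, he1, hc1, hl1⟩ := hp
  obtain ⟨c2, l2, he2, hc2, hl2⟩ := hq
  refine ⟨c1 + c2, l1 + l2, ?_, ?_, ?_⟩
  · rw [he1, he2, toPoly_add]
    have : ∀ i : σ, (l1 + l2) i * ((X i)^2 - X i)
        = l1 i * ((X i)^2 - X i) + l2 i * ((X i)^2 - X i) := by
      intro i; rw [Pi.add_apply]; ring
    rw [Finset.sum_congr rfl fun i _ => this i, Finset.sum_add_distrib]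
    abel
  · intro S h
    rw [Pi.add_apply] at h
    by_cases h1 : c1 S = 0
    · exact hc2 S (by rw [h1, zero_add] at h; exact h)
    · exact hc1 S h1
  · intro i
    have : (l1 + l2) i * ((X i)^2 - X i)
        = l1 i * ((X i)^2 - X i) + l2 i * ((X i)^2 - X i) := by
      rw [Pi.add_apply]; ring
    rw [this]
    exact le_trans (totalDegree_add _ _) (max_le (hl1 i) (hl2 i))

lemma Pred_mono {b : ℕ} (e : σ →₀ ℕ) (a : ℝ) (hb : degE e ≤ b) :
    Pred b (monomial e a) := by
  obtain ⟨lam, hsum, hdeg⟩ := mono_red (degE e) e le_rfl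
  refine ⟨fun S => if S = e.support then a else 0, fun i => C a * lam i, ?_, ?_, ?_⟩
  · have h1 : toPoly (fun S => if S = e.support then a else 0) = C a * msf e.support := by
      rw [toPoly]
      rw [Finset.sum_eq_single e.support]
      · rw [if_pos rfl]
      · intro S _ hS
        rw [if_neg hS, map_zero, zero_mul]
      · intro h; exact absurd (Finset.mem_univ _) h
    rw [h1]
    have h2 : monomial e a = C a * monomial e 1 := by
      rw [C_mul_monomial, mul_one]
    rw [h2, hsum, mul_add, Finset.mul_sum]
    congr 1
    exact Finset.sum_congr rfl fun i _ => by ring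
  · intro S h
    simp only [ne_eq, ite_eq_right_iff, not_forall] at h
    obtain ⟨hS, -⟩ := h
    subst hS
    exact le_trans (support_card_le_degE e) hb
  · intro i
    rw [mul_assoc]
    refine le_trans (totalDegree_mul _ _) ?_
    rw [totalDegree_C, zero_add]
    exact le_trans (hdeg i) hb

lemma mlin (b : ℕ) (p : MvPolynomial σ ℝ) (hp : p.totalDegree ≤ b) : Pred b p := by
  have hrep : p = ∑ e ∈ p.support, monomial e (coeff e p) :=
    (support_sum_monomial_coeff p).symm
  rw [hrep]
  refine Finset.sum_induction _ (Pred b) (fun _ _ => Pred_add) (Pred_zero b) ?_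
  intro e he
  refine Pred_mono e _ (le_trans ?_ hp)
  exact le_totalDegree he

lemma expand (nn : ℕ) (r : Finset σ → ℝ) :
    toPoly r * ((∑ i : σ, X i) - C (nn:ℝ))
      = toPoly (fun S => Uop r S + ((S.card : ℝ) - nn) * r S)
        + ∑ i : σ, (∑ S ∈ Finset.univ.filter (fun S => i ∈ S), C (r S) * msf (S.erase i))
            * ((X i)^2 - X i) := by
  have key : ∀ (S : Finset σ) (i : σ), C (r S) * msf S * X i
      = if i ∈ S then (C (r S) * msf (S.erase i)) * ((X i)^2 - X i) + C (r S) * msf S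
        else C (r S) * msf (insert i S) := by
    intro S i
    by_cases h : i ∈ S
    · rw [if_pos h]
      have hm : msf S = X i * msf (S.erase i) := (Finset.mul_prod_erase S X h).symm
      rw [hm]; ring
    · rw [if_neg h]
      have hm : msf (insert i S) = X i * msf S := Finset.prod_insert h
      rw [hm]; ring
  have main : toPoly r * (∑ i : σ, X i)
      = (∑ S : Finset σ, ∑ i ∈ S, (C (r S) * msf (S.erase i)) * ((X i)^2 - X i))
        + (∑ S : Finset σ, (S.card : ℕ) • (C (r S) * msf S))
        + (∑ S : Finset σ, ∑ i ∈ Sᶜ, C (r S) * msf (insert i S)) := by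
    rw [toPoly, Finset.sum_mul_sum]
    have step : ∀ S : Finset σ, ∑ i : σ, C (r S) * msf S * X i
        = (∑ i ∈ S, (C (r S) * msf (S.erase i)) * ((X i)^2 - X i))
          + (S.card : ℕ) • (C (r S) * msf S)
          + ∑ i ∈ Sᶜ, C (r S) * msf (insert i S) := by
      intro S
      rw [Finset.sum_congr rfl fun i _ => key S i]
      rw [← Finset.sum_filter_add_sum_filter_not Finset.univ (fun i => i ∈ S)]
      have hfil1 : Finset.univ.filter (fun i => i ∈ S) = S := by
        ext i; simp
      have hfil2 : Finset.univ.filter (fun i => ¬ i ∈ S) = Sᶜ := by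
        ext i; simp
      rw [hfil1, hfil2]
      have h1 : ∀ i ∈ S, (if i ∈ S then (C (r S) * msf (S.erase i)) * ((X i)^2 - X i)
          + C (r S) * msf S else C (r S) * msf (insert i S))
          = (C (r S) * msf (S.erase i)) * ((X i)^2 - X i) + C (r S) * msf S :=
        fun i hi => if_pos hi
      have h2 : ∀ i ∈ Sᶜ, (if i ∈ S then (C (r S) * msf (S.erase i)) * ((X i)^2 - X i)
          + C (r S) * msf S else C (r S) * msf (insert i S))
          = C (r S) * msf (insert i S) :=
        fun i hi => if_neg (Finset.mem_compl.mp hi)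
      rw [Finset.sum_congr rfl h1, Finset.sum_congr rfl h2, Finset.sum_add_distrib,
        Finset.sum_const]
    rw [Finset.sum_congr rfl fun S _ => step S, Finset.sum_add_distrib, Finset.sum_add_distrib]
  -- the insert-sum equals the Uop part
  have hA : (∑ S : Finset σ, ∑ i ∈ Sᶜ, C (r S) * msf (insert i S))
      = ∑ T : Finset σ, C (Uop r T) * msf T := by
    have := sum_erase_swap (fun S i => C (r S) * msf (insert i S)) Finset.univ
    simp only [Finset.mem_univ, if_true] at this
    rw [← this]
    refine Finset.sum_congr rfl fun T _ => ?_
    rw [Uop, map_sum, Finset.sum_mul]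
    refine Finset.sum_congr rfl fun i hi => ?_
    rw [Finset.insert_erase hi]
  -- swap the double sum for the square terms
  have hE : (∑ S : Finset σ, ∑ i ∈ S, (C (r S) * msf (S.erase i)) * ((X i)^2 - X i))
      = ∑ i : σ, (∑ S ∈ Finset.univ.filter (fun S => i ∈ S), C (r S) * msf (S.erase i))
          * ((X i)^2 - X i) := by
    have h1 : ∀ S : Finset σ, ∑ i ∈ S, (C (r S) * msf (S.erase i)) * ((X i)^2 - X i)
        = ∑ i : σ, if i ∈ S then (C (r S) * msf (S.erase i)) * ((X i)^2 - X i) else 0 := by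
      intro S
      rw [Finset.sum_ite_mem, Finset.univ_inter]
    rw [Finset.sum_congr rfl fun S _ => h1 S, Finset.sum_comm]
    refine Finset.sum_congr rfl fun i _ => ?_
    rw [Finset.sum_mul, ← Finset.sum_filter]
  rw [mul_sub, main, hA, hE]
  conv_rhs => rw [toPoly]
  have hΓ : ∀ S : Finset σ,
      C (Uop r S + ((S.card : ℝ) - nn) * r S) * msf S
      = C (Uop r S) * msf S + ((S.card : ℕ) • (C (r S) * msf S) - C (nn:ℝ) * (C (r S) * msf S)) := by
    intro S
    rw [map_add, map_mul, map_sub]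
    rw [nsmul_eq_mul, ← map_natCast (C : ℝ →+* MvPolynomial σ ℝ) S.card]
    ring
  rw [Finset.sum_congr rfl fun S _ => hΓ S]
  rw [Finset.sum_add_distrib, Finset.sum_sub_distrib]
  have hnn : (∑ S : Finset σ, C (r S) * msf S) * C (nn:ℝ)
      = ∑ S : Finset σ, C (nn:ℝ) * (C (r S) * msf S) := by
    rw [Finset.sum_mul]
    exact Finset.sum_congr rfl fun S _ => by ring
  rw [toPoly, hnn]
  abel

end MaxBi

open MaxBi Finset in
/-- Max-Bisection completeness: for d ≤ n, every degree-d polynomial vanishing on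
the Boolean strings of length 2n with exactly n ones has a derivation from
{xᵢ² − xᵢ} ∪ {Σᵢ xᵢ − n} in which every term has degree at most d. -/
theorem stmt_12 (n d : ℕ) (hd : d ≤ n) (p : MvPolynomial (Fin (2 * n)) ℝ)
    (hdeg : p.totalDegree ≤ d)
    (hvan : ∀ x : Fin (2 * n) → ℝ, (∀ i, x i = 0 ∨ x i = 1) →
      (∑ i, x i) = (n : ℝ) → eval x p = 0) :
    ∃ (lam : Fin (2 * n) → MvPolynomial (Fin (2 * n)) ℝ)
      (mu : MvPolynomial (Fin (2 * n)) ℝ),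
      p = (∑ i, lam i * (X i ^ 2 - X i)) + mu * (∑ i, X i - C (n : ℝ)) ∧
      (∀ i, (lam i * (X i ^ 2 - X i)).totalDegree ≤ d) ∧
      (mu * (∑ i, X i - C (n : ℝ))).totalDegree ≤ d := by
  classical
  have hcard : Fintype.card (Fin (2*n)) = 2*n := Fintype.card_fin _
  obtain ⟨c, lam0, hrep, hcsupp, hldeg⟩ := mlin d p hdeg
  have hvanc : ∀ T : Finset (Fin (2*n)), T.card = n → ∑ S ∈ T.powerset, c S = 0 := by
    intro T hT
    have hx := hvan (chi T) (chi_bool T) (by rw [chi_sum, hT])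
    rw [hrep, map_add, map_sum] at hx
    have hz : ∀ i : Fin (2*n), eval (chi T) (lam0 i * ((X i)^2 - X i)) = 0 := by
      intro i
      rw [map_mul, eval_sq_bool (chi T) (chi_bool T) i, mul_zero]
    rw [Finset.sum_congr rfl fun i _ => hz i, Finset.sum_const_zero, add_zero,
      eval_toPoly] at hx
    exact hx
  obtain ⟨r, hrsupp, hreq⟩ := core n d hd hcard c hcsupp hvanc
  have hexp := expand n r
  have hceq : (fun S => Uop r S + ((S.card : ℝ) - n) * r S) = c := by
    funext S; exact (hreq S).symm
  rw [hceq] at hexp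
  set kap : Fin (2*n) → MvPolynomial (Fin (2*n)) ℝ := fun i =>
    ∑ S ∈ Finset.univ.filter (fun S => i ∈ S), C (r S) * msf (S.erase i) with hkap
  have hkapdeg : ∀ i, (kap i * ((X i)^2 - X i)).totalDegree ≤ d := by
    intro i
    rw [hkap, Finset.sum_mul]
    refine le_trans (totalDegree_finset_sum _ _) ?_
    rw [Finset.sup_le_iff]
    intro S hS
    rw [Finset.mem_filter] at hS
    by_cases hr0 : r S = 0
    · rw [hr0, map_zero, zero_mul, zero_mul]
      simp
    · have hc1 : S.card + 1 ≤ d := hrsupp S hr0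
      have hc2 : 1 ≤ S.card := Finset.card_pos.mpr ⟨i, hS.2⟩
      refine le_trans (totalDegree_mul _ _) ?_
      have hterm : (C (r S) * msf (S.erase i)).totalDegree ≤ S.card - 1 := by
        refine le_trans (totalDegree_mul _ _) ?_
        rw [totalDegree_C, zero_add]
        refine le_trans (msf_totalDegree _) ?_
        rw [Finset.card_erase_of_mem hS.2]
      have hsq := sq_deg (σ := Fin (2*n)) i
      omega
  refine ⟨fun i => lam0 i - kap i, toPoly r, ?_, ?_, ?_⟩
  · rw [hrep]
    have hsub : ∑ i : Fin (2*n), (lam0 i - kap i) * ((X i)^2 - X i)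
        = (∑ i : Fin (2*n), lam0 i * ((X i)^2 - X i))
          - ∑ i : Fin (2*n), kap i * ((X i)^2 - X i) := by
      rw [← Finset.sum_sub_distrib]
      exact Finset.sum_congr rfl fun i _ => by ring
    rw [hsub]
    linear_combination -hexp
  · intro i
    have h2 : (lam0 i - kap i) * ((X i)^2 - X i)
        = lam0 i * ((X i)^2 - X i) - kap i * ((X i)^2 - X i) := by ring
    rw [h2]
    exact le_trans (totalDegree_sub _ _) (max_le (hldeg i) (hkapdeg i))
  · by_cases hd0 : d = 0
    · have hr0 : r = fun _ => 0 := by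
        funext S
        by_contra h0
        have := hrsupp S h0
        omega
      have : toPoly r = 0 := by
        rw [hr0]
        exact toPoly_zero
      rw [this, zero_mul]
      simp
    · refine le_trans (totalDegree_mul _ _) ?_
      have h1 : (toPoly r).totalDegree ≤ d - 1 :=
        toPoly_totalDegree fun S h => by have := hrsupp S h; omega
      have h2 : ((∑ i : Fin (2*n), X i) - C (n:ℝ) : MvPolynomial (Fin (2*n)) ℝ).totalDegree ≤ 1 := by
        refine le_trans (totalDegree_sub _ _) ?_
        refine max_le ?_ (by rw [totalDegree_C]; omega)
        refine le_trans (totalDegree_finset_sum _ _) ?_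
        rw [Finset.sup_le_iff]
        intro i _
        rw [totalDegree_X]
      omega
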